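/- Let a and b be distinct positive real numbers, let k > 0 be a real number, and let β ≥ 2/3 be a real number. Then He(a^k, b^k) < A_β(a^k, b^k), where He is the Heronian mean and A_β is the power mean of order β. -/

import Mathlib

lemma he_poly (u v : ℝ) (hu : 0 < u) (hv : 0 < v) (huv : u ≠ v) :
    8 * (u^6 + v^6 + u^3*v^3)^2 < 9 * ((u^4 + v^4))^3 := by
  have h4 : 0 < (u - v)^4 := by
    have := sub_ne_zero.2 huv
    positivity
  have hG : 0 < u^8 + 4*u^7*v + 10*u^6*v^2 + 4*u^5*v^3 - 2*u^4*v^4 + 4*u^3*v^5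
      + 10*u^2*v^6 + 4*u*v^7 + v^8 := by
    nlinarith [sq_nonneg (u^3*v - u*v^3), pow_pos hu 8, pow_pos hv 8,
      mul_pos (pow_pos hu 7) hv, mul_pos (pow_pos hu 5) (pow_pos hv 3),
      mul_pos (pow_pos hu 3) (pow_pos hv 5), mul_pos hu (pow_pos hv 7),
      mul_pos (pow_pos hu 4) (pow_pos hv 4)]
  nlinarith [mul_pos h4 hG]

lemma he_lt_m23 (x y : ℝ) (hx : 0 < x) (hy : 0 < y) (hxy : x ≠ y) :
    (x + y + Real.sqrt (x*y)) / 3 < ((x ^ (2/3:ℝ) + y ^ (2/3:ℝ)) / 2) ^ (3/2:ℝ) := by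
  set u := x ^ ((6:ℝ)⁻¹) with hudef
  set v := y ^ ((6:ℝ)⁻¹) with hvdef
  have hu : 0 < u := Real.rpow_pos_of_pos hx _
  have hv : 0 < v := Real.rpow_pos_of_pos hy _
  have hxu : x = u ^ 6 := by
    rw [hudef, ← Real.rpow_natCast (x ^ ((6:ℝ)⁻¹)) 6, ← Real.rpow_mul hx.le]
    norm_num
  have hyv : y = v ^ 6 := by
    rw [hvdef, ← Real.rpow_natCast (y ^ ((6:ℝ)⁻¹)) 6, ← Real.rpow_mul hy.le]
    norm_num
  have huv : u ≠ v := by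
    intro h
    apply hxy
    rw [hxu, hyv, h]
  have hx23 : x ^ (2/3:ℝ) = u ^ 4 := by
    rw [hudef, ← Real.rpow_natCast (x ^ ((6:ℝ)⁻¹)) 4, ← Real.rpow_mul hx.le]
    norm_num
  have hy23 : y ^ (2/3:ℝ) = v ^ 4 := by
    rw [hvdef, ← Real.rpow_natCast (y ^ ((6:ℝ)⁻¹)) 4, ← Real.rpow_mul hy.le]
    norm_num
  have hsqrt : Real.sqrt (x*y) = u^3 * v^3 := by
    rw [hxu, hyv]
    rw [show (u:ℝ)^6 * v^6 = (u^3*v^3)^2 by ring]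
    exact Real.sqrt_sq (by positivity)
  rw [hsqrt, hx23, hy23, hxu, hyv]
  have hQ : (0:ℝ) ≤ (u^4 + v^4)/2 := by positivity
  have hR : (0:ℝ) ≤ ((u^4 + v^4)/2) ^ (3/2:ℝ) := Real.rpow_nonneg hQ _
  refine lt_of_pow_lt_pow_left₀ 2 hR ?_
  have h2 : (((u^4 + v^4)/2) ^ (3/2:ℝ))^2 = ((u^4 + v^4)/2)^3 := by
    rw [← Real.rpow_natCast (((u^4 + v^4)/2) ^ (3/2:ℝ)) 2, ← Real.rpow_mul hQ,
      ← Real.rpow_natCast ((u^4 + v^4)/2) 3]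
    norm_num
  rw [h2]
  have := he_poly u v hu hv huv
  nlinarith [this]

lemma m23_le_mβ (x y : ℝ) (hx : 0 < x) (hy : 0 < y) (β : ℝ) (hβ : 2/3 ≤ β) :
    ((x ^ (2/3:ℝ) + y ^ (2/3:ℝ)) / 2) ^ (3/2:ℝ) ≤ ((x ^ β + y ^ β) / 2) ^ (1/β) := by
  have hβ0 : 0 < β := lt_of_lt_of_le (by norm_num) hβ
  set p : ℝ := 3*β/2 with hp
  have hp1 : 1 ≤ p := by rw [hp]; linarith
  have hp0 : 0 < p := by linarith
  have key := Real.arith_mean_le_rpow_mean (Finset.univ : Finset (Fin 2))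
    ![1/2, 1/2] ![x ^ (2/3:ℝ), y ^ (2/3:ℝ)]
    (by intro i _; fin_cases i <;> norm_num)
    (by simp [Fin.sum_univ_two]; norm_num)
    (by intro i _; fin_cases i <;> simp <;> positivity) hp1
  simp only [Fin.sum_univ_two, Matrix.cons_val_zero, Matrix.cons_val_one, Matrix.head_cons] at key
  have hxp : (x ^ (2/3:ℝ)) ^ p = x ^ β := by
    rw [← Real.rpow_mul hx.le]
    congr 1
    rw [hp]; ring
  have hyp : (y ^ (2/3:ℝ)) ^ p = y ^ β := by
    rw [← Real.rpow_mul hy.le]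
    congr 1
    rw [hp]; ring
  rw [hxp, hyp] at key
  have key2 : (x ^ (2/3:ℝ) + y ^ (2/3:ℝ))/2 ≤ ((x ^ β + y ^ β)/2) ^ (1/p) := by
    calc (x ^ (2/3:ℝ) + y ^ (2/3:ℝ))/2
        = 1/2 * x ^ (2/3:ℝ) + 1/2 * y ^ (2/3:ℝ) := by ring
      _ ≤ (1/2 * x ^ β + 1/2 * y ^ β) ^ (1/p) := key
      _ = ((x ^ β + y ^ β)/2) ^ (1/p) := by ring_nf
  have hL : (0:ℝ) ≤ (x ^ (2/3:ℝ) + y ^ (2/3:ℝ))/2 := by positivity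
  have h3 := Real.rpow_le_rpow hL key2 (by norm_num : (0:ℝ) ≤ 3/2)
  have hRnn : (0:ℝ) ≤ (x ^ β + y ^ β)/2 := by positivity
  rwa [← Real.rpow_mul hRnn, show (1/p) * (3/2) = 1/β by rw [hp]; field_simp] at h3

theorem heronian_lt_power_mean (a b : ℝ) (ha : 0 < a) (hb : 0 < b) (hab : a ≠ b)
    (k : ℝ) (hk : 0 < k) (β : ℝ) (hβ : 2 / 3 ≤ β) :
    (a ^ k + b ^ k + Real.sqrt (a ^ k * b ^ k)) / 3 <
      (((a ^ k) ^ β + (b ^ k) ^ β) / 2) ^ (1 / β) := by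
  set x := a ^ k with hxd
  set y := b ^ k with hyd
  have hx : 0 < x := Real.rpow_pos_of_pos ha _
  have hy : 0 < y := Real.rpow_pos_of_pos hb _
  have hxy : x ≠ y := by
    rcases lt_or_gt_of_ne hab with h | h
    · exact ne_of_lt (Real.rpow_lt_rpow ha.le h hk)
    · exact ne_of_gt (Real.rpow_lt_rpow hb.le h hk)
  calc (x + y + Real.sqrt (x*y)) / 3
      < ((x ^ (2/3:ℝ) + y ^ (2/3:ℝ)) / 2) ^ (3/2:ℝ) := he_lt_m23 x y hx hy hxy
    _ ≤ ((x ^ β + y ^ β) / 2) ^ (1/β) := m23_le_mβ x y hx hy β hβ
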